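/- Let γ : ℝ → ℝ^D be a C³ curve parametrized by arc length, i.e. ‖γ'(t)‖ = 1 for all t, set x = γ(0), and let V ⊆ ℝ^D be a linear subspace with γ'(0) ∈ V and γ''(0) ∈ V^⊥. Let P denote the orthogonal projection of ℝ^D onto V. Then there exist constants C > 0 and ε > 0 such that for all s ∈ (0, ε), | ‖P(γ(s) − x)‖ − s | ≤ C s³. -/

import Mathlib

open intervalIntegral in
lemma aux_int_bound {E : Type*} [NormedAddCommGroup E] [NormedSpace ℝ E] [CompleteSpace E]
    (f : ℝ → EuclideanSpace ℝ (Fin D)) (hf : Differentiable ℝ f) (hc : Continuous (deriv f))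
    (h0 : f 0 = 0) (M : ℝ) (n : ℕ) (hM : 0 ≤ M)
    (ε : ℝ) (hb : ∀ t ∈ Set.Icc (0:ℝ) ε, ‖deriv f t‖ ≤ M * t ^ n) :
    ∀ s ∈ Set.Icc (0:ℝ) ε, ‖f s‖ ≤ M * s ^ (n+1) := by
  intro s hs
  have hs0 : 0 ≤ s := hs.1
  have key : f s = ∫ t in (0:ℝ)..s, deriv f t := by
    rw [integral_deriv_eq_sub (fun x _ => hf x)
      (hc.intervalIntegrable 0 s), h0, sub_zero]
  rw [key]
  calc ‖∫ t in (0:ℝ)..s, deriv f t‖ ≤ M * s ^ n * |s - 0| := by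
        apply intervalIntegral.norm_integral_le_of_norm_le_const
        intro t ht
        rw [Set.uIoc_of_le hs0] at ht
        refine (hb t ⟨le_of_lt ht.1, le_trans ht.2 hs.2⟩).trans ?_
        have : t ^ n ≤ s ^ n := pow_le_pow_left₀ (le_of_lt ht.1) ht.2 n
        nlinarith
    _ = M * s ^ (n+1) := by
        rw [sub_zero, abs_of_nonneg hs0]; ring


/-- Statement (i) in the proof of Theorem 4 of the paper: for a unit-speed `C³`
curve `γ` with `γ'(0)` in the subspace `V` and `γ''(0)` in `Vᗮ`, the norm of the
orthogonal projection of `γ(s) − γ(0)` onto `V` estimates `s` with third-order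
error. -/
theorem stmt_9 {D : ℕ} (γ : ℝ → EuclideanSpace ℝ (Fin D))
    (hγ : ContDiff ℝ 3 γ)
    (hunit : ∀ t : ℝ, ‖deriv γ t‖ = 1)
    (x : EuclideanSpace ℝ (Fin D)) (hx : x = γ 0)
    (V : Submodule ℝ (EuclideanSpace ℝ (Fin D)))
    (htan : deriv γ 0 ∈ V) (hnor : deriv (deriv γ) 0 ∈ Vᗮ) :
    ∃ C > (0 : ℝ), ∃ ε > (0 : ℝ), ∀ s ∈ Set.Ioo (0 : ℝ) ε,
      |‖(V.orthogonalProjectionOnto (γ s - x) : EuclideanSpace ℝ (Fin D))‖ - s|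
        ≤ C * s ^ 3 := by

  set a := deriv γ 0 with ha
  set b := deriv (deriv γ) 0 with hb
  -- regularity
  have h3 : ContDiff ℝ ((2:ℕ) + 1) γ := by exact_mod_cast hγ
  have h2 : ContDiff ℝ 2 (deriv γ) := (contDiff_succ_iff_deriv.mp h3).2.2
  have h2' : ContDiff ℝ ((1:ℕ) + 1) (deriv γ) := by exact_mod_cast h2
  have h1 : ContDiff ℝ 1 (deriv (deriv γ)) := (contDiff_succ_iff_deriv.mp h2').2.2
  have hd0 : Differentiable ℝ γ := hγ.differentiable (by norm_num)
  have hd1 : Differentiable ℝ (deriv γ) := h2.differentiable (by norm_num)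
  -- Lipschitz bound on the second derivative near 0
  obtain ⟨K, t, ht, hlip⟩ := (h1.contDiffAt (x := 0)).exists_lipschitzOnWith
  obtain ⟨ε, hε, hball⟩ := Metric.mem_nhds_iff.mp ht
  set ε' := ε / 2 with hε'
  have hε'pos : 0 < ε' := by positivity
  have hsub : Set.Icc (0:ℝ) ε' ⊆ t := fun u hu => hball (by
    simp only [Metric.mem_ball, Real.dist_eq, sub_zero]
    rw [abs_of_nonneg hu.1]; linarith [hu.2])
  -- auxiliary functions
  set g₁ : ℝ → EuclideanSpace ℝ (Fin D) := fun u => deriv γ u - a - u • b with hg₁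
  set g : ℝ → EuclideanSpace ℝ (Fin D) := fun u => γ u - γ 0 - u • a - (u^2/2) • b with hg
  have hg₁deriv : ∀ u, HasDerivAt g₁ (deriv (deriv γ) u - b) u := by
    intro u
    have := (((hd1 u).hasDerivAt.sub_const a).sub ((hasDerivAt_id u).smul_const b))
    simp only [one_smul] at this; exact this
  have hgderiv : ∀ u, HasDerivAt g (g₁ u) u := by
    intro u
    have hsq : HasDerivAt (fun v : ℝ => v^2/2) u u := by
      simpa using (hasDerivAt_pow 2 u).div_const 2
    have := ((((hd0 u).hasDerivAt.sub_const (γ 0)).sub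
      ((hasDerivAt_id u).smul_const a)).sub (hsq.smul_const b))
    simp only [one_smul] at this; exact this
  have hg₁d : Differentiable ℝ g₁ := fun u => (hg₁deriv u).differentiableAt
  have hgd : Differentiable ℝ g := fun u => (hgderiv u).differentiableAt
  have hder1 : deriv g₁ = fun u => deriv (deriv γ) u - b := funext fun u => (hg₁deriv u).deriv
  have hder : deriv g = g₁ := funext fun u => (hgderiv u).deriv
  have hc1 : Continuous (deriv g₁) := by
    rw [hder1]; exact (h1.continuous).sub continuous_const
  have hc : Continuous (deriv g) := by
    rw [hder]; exact ((h2.continuous).sub continuous_const).sub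
      (continuous_id.smul continuous_const)
  -- bound ‖g₁‖ ≤ K s²
  have hb1 : ∀ u ∈ Set.Icc (0:ℝ) ε', ‖deriv g₁ u‖ ≤ (K:ℝ) * u ^ 1 := by
    intro u hu
    rw [hder1]
    have := hlip.dist_le_mul u (hsub hu) 0 (hsub ⟨le_refl 0, le_of_lt hε'pos⟩)
    rw [dist_eq_norm, Real.dist_eq, sub_zero] at this
    simpa [hb, abs_of_nonneg hu.1] using this
  have hbg₁ : ∀ s ∈ Set.Icc (0:ℝ) ε', ‖g₁ s‖ ≤ (K:ℝ) * s ^ 2 :=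
    aux_int_bound (E := EuclideanSpace ℝ (Fin D)) g₁ hg₁d hc1 (by simp [hg₁, ha]) _ 1 K.coe_nonneg ε' hb1
  have hbg : ∀ s ∈ Set.Icc (0:ℝ) ε', ‖g s‖ ≤ (K:ℝ) * s ^ 3 := by
    refine aux_int_bound (E := EuclideanSpace ℝ (Fin D)) g hgd hc (by simp [hg]) _ 2 K.coe_nonneg ε' ?_
    intro u hu; rw [hder]; exact hbg₁ u hu
  -- conclude
  refine ⟨(K:ℝ) + 1, by positivity, ε', hε'pos, fun s hs => ?_⟩
  have hs0 : 0 < s := hs.1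
  have hdecomp : γ s - x = s • a + (s^2/2) • b + g s := by
    rw [hx]; simp only [hg]; abel
  have hP : ((V.orthogonalProjectionOnto (γ s - x)) : EuclideanSpace ℝ (Fin D))
      = s • a + ((V.orthogonalProjectionOnto (g s)) : EuclideanSpace ℝ (Fin D)) := by
    rw [hdecomp, map_add, map_add, map_smul, map_smul,
      Submodule.orthogonalProjectionOnto_apply_of_mem_orthogonal hnor]
    push_cast
    rw [Submodule.coe_orthogonalProjectionOnto_apply, Submodule.starProjection_eq_self_iff.mpr htan]
    simp
  have hnorm_sa : ‖s • a‖ = s := by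
    rw [norm_smul, ha, hunit 0, Real.norm_eq_abs, abs_of_pos hs0, mul_one]
  have hPg : ‖((V.orthogonalProjectionOnto (g s)) : EuclideanSpace ℝ (Fin D))‖ ≤ ‖g s‖ := by
    calc ‖((V.orthogonalProjectionOnto (g s)) : EuclideanSpace ℝ (Fin D))‖ = ‖V.orthogonalProjectionOnto (g s)‖ := rfl
      _ ≤ ‖V.orthogonalProjectionOnto‖ * ‖g s‖ := (V.orthogonalProjectionOnto).le_opNorm _
      _ ≤ 1 * ‖g s‖ :=
          mul_le_mul_of_nonneg_right (Submodule.orthogonalProjectionOnto_norm_le V) (norm_nonneg _)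
      _ = ‖g s‖ := one_mul _
  calc |‖((V.orthogonalProjectionOnto (γ s - x)) : EuclideanSpace ℝ (Fin D))‖ - s|
      = |‖s • a + ((V.orthogonalProjectionOnto (g s)) : EuclideanSpace ℝ (Fin D))‖ - ‖s • a‖| := by rw [hP, hnorm_sa]
    _ ≤ ‖((V.orthogonalProjectionOnto (g s)) : EuclideanSpace ℝ (Fin D))‖ := by
        have := abs_norm_sub_norm_le (s • a + ((V.orthogonalProjectionOnto (g s)) : EuclideanSpace ℝ (Fin D))) (s • a)
        simpa using this
    _ ≤ ‖g s‖ := hPg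
    _ ≤ (K:ℝ) * s ^ 3 := hbg s ⟨le_of_lt hs0, le_of_lt hs.2⟩
    _ ≤ ((K:ℝ) + 1) * s ^ 3 := by nlinarith [pow_pos hs0 3]
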